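/- arXiv:2011.05353 — 2 statements merged into one kernel-verified Lean document; each statement's English description precedes it below -/
import Mathlib

section
/- Let (V,E) be a temporal graph over timestamps {0,…,T}, let α ∈ [0,1], and let u ≠ v be vertices of V. Then the shortest-fastest-path distance d(u,v) equals the minimum, over all pairs of timestamps t_i, t_j ∈ {0,…,T}, of the shortest-path distance in the transformed graph G' from the replica (u,t_i) to the replica (v,t_j) (both minima taken in ℝ≥0∞, equal to ∞ when no path exists). -/
open scoped ENNReal BigOperators

variable {V : Type*}

/-- `p` is a temporal path from `u` to `v` with edges in `E`:
a nonempty list of timestamped edges, consecutive in space and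
with nondecreasing timestamps. -/
def IsTempPath (E : Set (V × V × ℕ)) (u v : V) (p : List (V × V × ℕ)) : Prop :=
  p ≠ [] ∧ (∀ e ∈ p, e ∈ E) ∧
    List.Chain' (fun e f : V × V × ℕ => e.2.1 = f.1 ∧ e.2.2 ≤ f.2.2) p ∧
    p.head?.map Prod.fst = some u ∧
    p.getLast?.map (fun e => e.2.1) = some v

/-- Timestamp of the first edge of a temporal path. -/
def firstTime (p : List (V × V × ℕ)) : ℕ := (p.head?.map (fun e => e.2.2)).getD 0

/-- Timestamp of the last edge of a temporal path. -/
def lastTime (p : List (V × V × ℕ)) : ℕ := (p.getLast?.map (fun e => e.2.2)).getD 0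

/-- Cost `L_α(p) = α·(number of edges) + (1-α)·(t_n - t_0)` of a temporal path. -/
noncomputable def costL (α : ℝ) (p : List (V × V × ℕ)) : ℝ :=
  α * p.length + (1 - α) * ((lastTime p : ℝ) - (firstTime p : ℝ))

/-- Shortest-fastest-path distance: infimum of `L_α` over temporal paths from `u` to `v`,
taken in `ℝ≥0∞` (so `∞` if no temporal path exists). -/
noncomputable def sfpDist (α : ℝ) (E : Set (V × V × ℕ)) (u v : V) : ℝ≥0∞ :=
  sInf {c : ℝ≥0∞ | ∃ p, IsTempPath E u v p ∧ c = ENNReal.ofReal (costL α p)}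

/-- Adjacency of the transformed graph `G'` on `V × {0,…,T}`:
waiting edges `(v,t) → (v,t+1)` and snapshot edges `(u,t) → (v,t)` for `(u,v,t) ∈ E`. -/
def TransAdj (E : Set (V × V × ℕ)) (T : ℕ) : V × ℕ → V × ℕ → Prop := fun a b =>
  (a.1 = b.1 ∧ b.2 = a.2 + 1 ∧ b.2 ≤ T) ∨ ((a.1, b.1, a.2) ∈ E ∧ b.2 = a.2)

/-- Weight of an edge of the transformed graph: `α` for snapshot edges (same timestamp),
`1 - α` for waiting edges. -/
noncomputable def transWeight (α : ℝ) (a b : V × ℕ) : ℝ := if a.2 = b.2 then α else 1 - α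

/-- Length `ℓ` of a path in the transformed graph (given as its list of visited vertices):
the sum of the weights of its edges. -/
noncomputable def transLen (α : ℝ) (p : List (V × ℕ)) : ℝ :=
  ((p.zip p.tail).map fun ab => transWeight α ab.1 ab.2).sum

/-- `p` is a directed path in the transformed graph from `x` to `y`,
given as its (nonempty) list of visited vertices. -/
def IsTransPath (E : Set (V × V × ℕ)) (T : ℕ) (x y : V × ℕ) (p : List (V × ℕ)) : Prop :=
  p ≠ [] ∧ List.Chain' (TransAdj E T) p ∧ p.head? = some x ∧ p.getLast? = some y

/-- Projection of a transformed-graph path to a list of timestamped edges: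
delete the waiting edges and read each snapshot edge `((x,t),(y,t))` as `(x,y,t)`. -/
def project (p : List (V × ℕ)) : List (V × V × ℕ) :=
  ((p.zip p.tail).filter fun ab => ab.1.2 == ab.2.2).map fun ab => (ab.1.1, ab.2.1, ab.1.2)

/-- Shortest-path distance in the transformed graph, in `ℝ≥0∞`. -/
noncomputable def transDist (E : Set (V × V × ℕ)) (T : ℕ) (α : ℝ) (x y : V × ℕ) : ℝ≥0∞ :=
  sInf {c : ℝ≥0∞ | ∃ p, IsTransPath E T x y p ∧ c = ENNReal.ofReal (transLen α p)}

/-- Shortest-path distance (number of edges) in a static graph with adjacency `A`,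
in `ℝ≥0∞`: the infimum of the number of edges over (nonempty) walks from `u` to `v`. -/
noncomputable def staticDist (A : V → V → Prop) (u v : V) : ℝ≥0∞ :=
  sInf {c : ℝ≥0∞ | ∃ p : List (V × V), p ≠ [] ∧ (∀ e ∈ p, A e.1 e.2) ∧
    List.Chain' (fun e f : V × V => e.2 = f.1) p ∧
    p.head?.map Prod.fst = some u ∧ p.getLast?.map Prod.snd = some v ∧
    c = (p.length : ℝ≥0∞)}

/-- Per-pair temporal inefficiency `[(1 - α/d(v,u)) + (1 - α/d(u,v))]/2`,
with the convention `α/∞ = 0` (via `ENNReal.toReal`). -/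
noncomputable def perPairIneff (α : ℝ) (E : Set (V × V × ℕ)) (u v : V) : ℝ :=
  ((1 - α / (sfpDist α E v u).toReal) + (1 - α / (sfpDist α E u v).toReal)) / 2

/-- Temporal network inefficiency: the sum of the per-pair inefficiency over unordered
pairs of distinct vertices (the summand is symmetric, so we sum over ordered pairs and
halve). -/
noncomputable def tempIneff (α : ℝ) (E : Set (V × V × ℕ)) [Fintype V] [DecidableEq V] : ℝ :=
  (∑ q ∈ Finset.univ.offDiag, perPairIneff α E (Prod.fst q) (Prod.snd q)) / 2

/-- Temporal edges of the subgraph induced by `S`. -/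
def inducedE (E : Set (V × V × ℕ)) (S : Set V) : Set (V × V × ℕ) :=
  {e ∈ E | e.1 ∈ S ∧ e.2.1 ∈ S}

/-- Temporal network inefficiency of the temporal subgraph induced by a finite set `S`. -/
noncomputable def tempIneffOn (α : ℝ) (E : Set (V × V × ℕ)) [DecidableEq V]
    (S : Finset V) : ℝ :=
  (∑ q ∈ S.offDiag, perPairIneff α (inducedE E ↑S) (Prod.fst q) (Prod.snd q)) / 2

/-- Static network inefficiency `Σ_{u ≠ v ∈ S} (1 - 1/d_{G[S]}(u,v))` (unordered pairs,
with `1/∞ = 0`) of the subgraph induced by `S` in the static graph with adjacency `A`. -/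
noncomputable def staticIneffOn (A : V → V → Prop) [DecidableEq V] (S : Finset V) : ℝ :=
  (∑ q ∈ S.offDiag,
    (1 - 1 / (staticDist (fun x y => A x y ∧ x ∈ S ∧ y ∈ S)
      (Prod.fst q) (Prod.snd q)).toReal)) / 2

lemma project_nil : project ([] : List (V × ℕ)) = [] := rfl
lemma project_single (a : V × ℕ) : project [a] = [] := rfl
lemma transLen_nil (α : ℝ) : transLen α ([] : List (V × ℕ)) = 0 := rfl
lemma transLen_single (α : ℝ) (a : V × ℕ) : transLen α [a] = 0 := rfl

lemma project_cons_cons (a b : V × ℕ) (l : List (V × ℕ)) :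
    project (a :: b :: l) =
      (if a.2 = b.2 then [(a.1, b.1, a.2)] else []) ++ project (b :: l) := by
  simp only [project, List.zip_cons_cons, List.tail_cons, List.filter_cons]
  by_cases h : a.2 = b.2 <;> simp [h]

lemma transLen_cons_cons (α : ℝ) (a b : V × ℕ) (l : List (V × ℕ)) :
    transLen α (a :: b :: l) = transWeight α a b + transLen α (b :: l) := by
  simp [transLen, List.zip_cons_cons]

lemma key (E : Set (V × V × ℕ)) (T : ℕ) (α : ℝ) :
    ∀ (p : List (V × ℕ)) (x y : V × ℕ), List.Chain' (TransAdj E T) p →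
      p.head? = some x → p.getLast? = some y →
      x.2 ≤ y.2 ∧
      transLen α p = α * (project p).length + (1 - α) * ((y.2 : ℝ) - (x.2 : ℝ)) ∧
      (∀ e ∈ project p, e ∈ E) ∧
      List.Chain' (fun e f : V × V × ℕ => e.2.1 = f.1 ∧ e.2.2 ≤ f.2.2) (project p) ∧
      (project p = [] → x.1 = y.1) ∧
      (∀ e, (project p).head? = some e → e.1 = x.1 ∧ x.2 ≤ e.2.2) ∧
      (∀ e, (project p).getLast? = some e → e.2.1 = y.1 ∧ e.2.2 ≤ y.2) := by
  intro p
  induction p with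
  | nil => intro x y _ hx; simp at hx
  | cons a l ih =>
    intro x y hch hx hy
    simp only [List.head?_cons, Option.some.injEq] at hx
    subst hx
    match l with
    | [] =>
      simp only [List.getLast?_singleton, Option.some.injEq] at hy
      subst hy
      refine ⟨le_rfl, by simp [transLen_single, project_single], ?_⟩
      simp [project_single, List.Chain']
    | b :: l' =>
      rw [List.Chain', List.isChain_cons_cons] at hch
      obtain ⟨hab, hch⟩ := hch
      have hy' : (b :: l').getLast? = some y := by
        rw [List.getLast?_cons_cons] at hy; exact hy
      obtain ⟨h1, h2, h3, h4, h5, h6, h7⟩ := ih b y hch rfl hy'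
      rcases hab with ⟨hv, ht, hTb⟩ | ⟨hE, ht⟩
      · -- waiting edge
        have hne : a.2 ≠ b.2 := by omega
        have hproj : project (a :: b :: l') = project (b :: l') := by
          rw [project_cons_cons, if_neg hne]; simp
        have hx2 : a.2 ≤ y.2 := by omega
        refine ⟨hx2, ?_, ?_, ?_, ?_, ?_, ?_⟩
        · rw [transLen_cons_cons, hproj, h2, transWeight, if_neg hne]
          have : (b.2 : ℝ) = (a.2 : ℝ) + 1 := by exact_mod_cast ht
          ring_nf
          rw [this]; ring
        · rw [hproj]; exact h3
        · rw [hproj]; exact h4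
        · rw [hproj]; intro h; rw [hv]; exact h5 h
        · rw [hproj]; intro e he
          obtain ⟨he1, he2⟩ := h6 e he
          exact ⟨by rw [hv]; exact he1, by omega⟩
        · rw [hproj]; exact h7
      · -- snapshot edge
        have hproj : project (a :: b :: l') =
            (a.1, b.1, a.2) :: project (b :: l') := by
          rw [project_cons_cons, if_pos ht.symm]; simp
        have hx2 : a.2 ≤ y.2 := by omega
        refine ⟨hx2, ?_, ?_, ?_, ?_, ?_, ?_⟩
        · rw [transLen_cons_cons, hproj, h2, transWeight, if_pos ht.symm]
          have hb : (b.2 : ℝ) = (a.2 : ℝ) := by exact_mod_cast ht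
          simp only [List.length_cons]
          push_cast
          rw [hb]; ring
        · rw [hproj]; intro e he
          rcases List.mem_cons.mp he with h | h
          · subst h; exact hE
          · exact h3 e h
        · rw [hproj, List.Chain', List.isChain_cons]
          refine ⟨?_, h4⟩
          intro f hf
          obtain ⟨hf1, hf2⟩ := h6 f hf
          exact ⟨hf1.symm, show a.2 ≤ f.2.2 by omega⟩
        · rw [hproj]; intro h; simp at h
        · rw [hproj]; intro e he
          simp only [List.head?_cons, Option.some.injEq] at he
          subst he; exact ⟨rfl, le_rfl⟩
        · rw [hproj]; intro e he
          match hpl : project (b :: l') with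
          | [] =>
            rw [hpl] at he
            simp only [List.getLast?_singleton, Option.some.injEq] at he
            subst he
            exact ⟨h5 hpl, show a.2 ≤ y.2 by omega⟩
          | f :: pl' =>
            rw [hpl, List.getLast?_cons_cons] at he
            exact h7 e (by rw [hpl]; exact he)

def waitList (b : V) : ℕ → ℕ → List (V × ℕ)
  | _, 0 => []
  | t, m + 1 => (b, t) :: waitList b (t + 1) m

def buildP : List (V × V × ℕ) → List (V × ℕ)
  | [] => []
  | [(a, b, t)] => [(a, t), (b, t)]
  | (a, b, t) :: e :: rest =>
      (a, t) :: (waitList b t (e.2.2 - t) ++ buildP (e :: rest))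

lemma headWait (b : V) (Q : List (V × ℕ)) :
    ∀ (m t : ℕ), Q.head? = some (b, t + m) →
      (waitList b t m ++ Q).head? = some (b, t) := by
  intro m
  induction m with
  | zero => intro t h; simpa [waitList] using h
  | succ m ih => intro t h; simp [waitList]

lemma project_cons (x : V × ℕ) (l : List (V × ℕ)) (q : V × ℕ) (h : l.head? = some q) :
    project (x :: l) = (if x.2 = q.2 then [(x.1, q.1, x.2)] else []) ++ project l := by
  match l with
  | [] => simp at h
  | c :: l' =>
    simp only [List.head?_cons, Option.some.injEq] at h
    subst h
    exact project_cons_cons x c l'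

lemma waitChainApp (E : Set (V × V × ℕ)) (T : ℕ) (b : V) (Q : List (V × ℕ)) :
    ∀ (m t : ℕ), Q.head? = some (b, t + m) → t + m ≤ T →
      List.Chain' (TransAdj E T) Q →
      List.Chain' (TransAdj E T) (waitList b t m ++ Q) := by
  intro m
  induction m with
  | zero => intro t h _ hQ; simpa [waitList] using hQ
  | succ m ih =>
    intro t h hT hQ
    have hh : Q.head? = some (b, (t + 1) + m) := by
      rw [h]; congr 2; omega
    rw [waitList, List.cons_append, List.Chain', List.isChain_cons]
    refine ⟨?_, ih (t + 1) hh (by omega) hQ⟩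
    intro y hy
    rw [headWait b Q m (t+1) hh] at hy
    simp only [Option.mem_def, Option.some.injEq] at hy
    subst hy
    exact Or.inl ⟨rfl, rfl, by omega⟩

lemma projWaitApp (b : V) (Q : List (V × ℕ)) :
    ∀ (m t : ℕ), Q.head? = some (b, t + m) →
      project (waitList b t m ++ Q) = project Q := by
  intro m
  induction m with
  | zero => intro t h; simp [waitList]
  | succ m ih =>
    intro t h
    have hh : Q.head? = some (b, (t + 1) + m) := by rw [h]; congr 2; omega
    rw [waitList, List.cons_append,
      project_cons (b, t) _ (b, t + 1) (headWait b Q m (t+1) hh)]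
    simp only [if_neg (by omega : ¬ ((b,t).2 = (b, t+1).2))]
    simpa using ih (t + 1) hh

lemma build_spec (E : Set (V × V × ℕ)) (T : ℕ) :
    ∀ (rest : List (V × V × ℕ)) (a b : V) (t : ℕ),
      (∀ e ∈ (a, b, t) :: rest, e ∈ E) →
      List.Chain' (fun e f : V × V × ℕ => e.2.1 = f.1 ∧ e.2.2 ≤ f.2.2) ((a, b, t) :: rest) →
      (∀ e ∈ (a, b, t) :: rest, e.2.2 ≤ T) →
      List.Chain' (TransAdj E T) (buildP ((a, b, t) :: rest)) ∧
      (buildP ((a, b, t) :: rest)).head? = some (a, t) ∧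
      (buildP ((a, b, t) :: rest)).getLast? =
        (((a, b, t) :: rest).getLast?.map fun e => (e.2.1, e.2.2)) ∧
      project (buildP ((a, b, t) :: rest)) = (a, b, t) :: rest := by
  intro rest
  induction rest with
  | nil =>
    intro a b t hE _ _
    refine ⟨?_, rfl, rfl, ?_⟩
    · rw [buildP, List.Chain', List.isChain_cons_cons]
      exact ⟨Or.inr ⟨hE _ (by simp), rfl⟩, List.isChain_singleton _⟩
    · rw [buildP, project_cons_cons]
      simp [project_single]
  | cons e rest ih =>
    intro a b t hE hch hT
    rw [List.Chain', List.isChain_cons_cons] at hch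
    obtain ⟨⟨heb, hts⟩, hch⟩ := hch
    obtain ⟨ihc, ihh, ihl, ihp⟩ := ih e.1 e.2.1 e.2.2
      (fun f hf => hE f (by simp [hf])) (by simpa [List.Chain'] using hch)
      (fun f hf => hT f (by simp [hf]))
    simp only [show ((a,b,t) : V × V × ℕ).2.1 = b from rfl,
      show ((a,b,t) : V × V × ℕ).2.2 = t from rfl] at heb hts
    have hQhead : (buildP (e :: rest)).head? = some (b, t + (e.2.2 - t)) := by
      rw [ihh]
      have h1 : t + (e.2.2 - t) = e.2.2 := by omega
      rw [h1, heb]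
    have hbuild : buildP ((a, b, t) :: e :: rest) =
        (a, t) :: (waitList b t (e.2.2 - t) ++ buildP (e :: rest)) := rfl
    have hsT : e.2.2 ≤ T := hT e (by simp)
    refine ⟨?_, by rw [hbuild]; rfl, ?_, ?_⟩
    · rw [hbuild, List.Chain', List.isChain_cons]
      refine ⟨?_, waitChainApp E T b _ _ _ hQhead (by omega) ihc⟩
      intro y hy
      rw [headWait b _ _ _ hQhead] at hy
      simp only [Option.mem_def, Option.some.injEq] at hy
      subst hy
      exact Or.inr ⟨hE (a, b, t) (by simp), rfl⟩
    · have hz : ∃ z, (e :: rest).getLast? = some z := by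
        cases h : (e :: rest).getLast? with
        | none => exact absurd h (by simp)
        | some w => exact ⟨w, rfl⟩
      obtain ⟨z, hz⟩ := hz
      rw [hbuild, ← List.cons_append, List.getLast?_cons_cons,
        List.getLast?_append_of_ne_nil, ihl]
      intro h
      rw [h] at ihh
      simp at ihh
    · rw [hbuild, project_cons (a, t) _ (b, t) (headWait b _ _ _ hQhead)]
      rw [if_pos rfl, projWaitApp b _ _ _ hQhead, ihp]
      rfl

/-- for distinct vertices `u ≠ v`, the shortest-fastest-path distance
`d(u,v)` equals the minimum over all pairs of timestamps `t_i, t_j ∈ {0,…,T}` of the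
shortest-path distance in the transformed graph `G'` from `(u,t_i)` to `(v,t_j)`. -/
theorem stmt2 (T : ℕ) (E : Set (V × V × ℕ)) (α : ℝ)
    (hsym : ∀ u v t, (u, v, t) ∈ E ↔ (v, u, t) ∈ E)
    (hT : ∀ e ∈ E, e.2.2 ≤ T) (hα0 : 0 ≤ α) (hα1 : α ≤ 1)
    (u v : V) (huv : u ≠ v) :
    sfpDist α E u v =
      ⨅ (ti : Fin (T + 1)) (tj : Fin (T + 1)),
        transDist E T α (u, (ti : ℕ)) (v, (tj : ℕ)) := by
  apply le_antisymm
  · refine le_iInf fun ti => le_iInf fun tj => le_sInf fun c hc => ?_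
    obtain ⟨p, ⟨hne, hch, hhd, hlt⟩, rfl⟩ := hc
    obtain ⟨h1, h2, h3, h4, h5, h6, h7⟩ := key E T α p (u, (ti : ℕ)) (v, (tj : ℕ)) hch hhd hlt
    match hq : project p with
    | [] => exact absurd (h5 hq) huv
    | e0 :: q' =>
      have hhead : (project p).head? = some e0 := by rw [hq]; rfl
      obtain ⟨f, hlast⟩ : ∃ f, (project p).getLast? = some f := by
        rw [hq]; exact ⟨_, rfl⟩
      obtain ⟨he0, hti⟩ := h6 e0 hhead
      obtain ⟨hf, htj⟩ := h7 f hlast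
      have htp : IsTempPath E u v (project p) := by
        refine ⟨by rw [hq]; simp, h3, h4, ?_, ?_⟩
        · rw [hhead]; simp [he0]
        · rw [hlast]; simp [hf]
      have hle : sfpDist α E u v ≤ ENNReal.ofReal (costL α (project p)) :=
        sInf_le ⟨project p, htp, rfl⟩
      refine hle.trans (ENNReal.ofReal_le_ofReal ?_)
      rw [costL, firstTime, lastTime, hhead, hlast, h2]
      simp only [Option.map_some, Option.getD_some]
      have h8 : (f.2.2 : ℝ) - e0.2.2 ≤ ((tj : ℕ) : ℝ) - ((ti : ℕ) : ℝ) := by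
        have := (u, (ti : ℕ)).2
        push_cast
        have hti' : ((ti : ℕ) : ℝ) ≤ e0.2.2 := by exact_mod_cast hti
        have htj' : (f.2.2 : ℝ) ≤ (tj : ℕ) := by exact_mod_cast htj
        linarith
      nlinarith [h8]
  · refine le_sInf fun c hc => ?_
    obtain ⟨p, ⟨hne, hmem, hch, hhd, hlt⟩, rfl⟩ := hc
    match p, hne with
    | (a, b, t) :: rest, _ =>
      simp only [List.head?_cons, Option.map_some, Option.some.injEq] at hhd
      subst hhd
      obtain ⟨bc, bh, bl, bp⟩ := build_spec E T rest a b t hmem hch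
        (fun e he => hT e (hmem e he))
      obtain ⟨f, hf⟩ : ∃ f, ((a, b, t) :: rest).getLast? = some f := ⟨_, rfl⟩
      have hfv : f.2.1 = v := by rw [hf] at hlt; simpa using hlt
      have hfmem : f ∈ (a, b, t) :: rest := List.mem_of_getLast? hf
      have htT : t ≤ T := hT (a, b, t) (hmem _ (by simp))
      have hfT : f.2.2 ≤ T := hT f (hmem f hfmem)
      set q := buildP ((a, b, t) :: rest) with hqdef
      have hqlast : q.getLast? = some (v, f.2.2) := by
        rw [bl, hf]; simp [hfv, Prod.ext_iff]
      have hqhead : q.head? = some (a, t) := bh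
      have hqne : q ≠ [] := by
        intro h; rw [h] at hqhead; simp at hqhead
      obtain ⟨k1, k2, k3, k4, k5, k6, k7⟩ := key E T α q (a, t) (v, f.2.2) bc hqhead hqlast
      have hcost : transLen α q = costL α ((a, b, t) :: rest) := by
        rw [k2, bp, costL, firstTime, lastTime, hf]
        simp only [Option.map_some, Option.getD_some, List.head?_cons]
      have step1 : (⨅ (ti : Fin (T + 1)) (tj : Fin (T + 1)),
          transDist E T α (a, (ti : ℕ)) (v, (tj : ℕ))) ≤
          transDist E T α (a, t) (v, f.2.2) := by
        refine le_trans (iInf_le _ (⟨t, by omega⟩ : Fin (T + 1))) ?_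
        exact iInf_le _ (⟨f.2.2, by omega⟩ : Fin (T + 1))
      refine step1.trans ?_
      have : transDist E T α (a, t) (v, f.2.2) ≤
          ENNReal.ofReal (transLen α q) :=
        sInf_le ⟨q, ⟨hqne, bc, hqhead, hqlast⟩, rfl⟩
      rw [hcost] at this
      exact this
end

section
/- Let (V,E) be a finite temporal graph over timestamps {0,…,T} and let u, v ∈ V be such that at least one temporal path from u to v exists. Then there exists ε > 0 such that for all α ∈ (1−ε,1), a temporal path p from u to v minimizes the cost L_α if and only if p has the minimum number of edges among all temporal paths from u to v and, among all temporal paths with that minimum number of edges, p has minimum duration t_n − t_0. -/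
open scoped ENNReal BigOperators

variable {V : Type*}

lemma headLast_mono {β : Type*} (f : β → ℕ) :
    ∀ (l : List β), List.Chain' (fun a b => f a ≤ f b) l →
      ∀ a b, l.head? = some a → l.getLast? = some b → f a ≤ f b := by
  intro l
  induction l with
  | nil => intro _ a b h; simp at h
  | cons x xs ih =>
    intro hc a b ha hb
    simp only [List.head?_cons, Option.some.injEq] at ha
    subst ha
    cases xs with
    | nil => simp at hb; subst hb; exact le_refl _
    | cons y ys =>
      rw [List.Chain', List.isChain_cons_cons] at hc
      rw [List.getLast?_cons_cons] at hb
      exact le_trans hc.1 (ih hc.2 y b rfl hb)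

lemma first_le_last {E : Set (V × V × ℕ)} {u v : V} {p : List (V × V × ℕ)}
    (h : IsTempPath E u v p) : firstTime p ≤ lastTime p := by
  obtain ⟨hne, -, hch, -, -⟩ := h
  have hch' : List.Chain' (fun e f : V × V × ℕ => e.2.2 ≤ f.2.2) p :=
    hch.imp fun a b hab => hab.2
  obtain ⟨a, ha⟩ := Option.ne_none_iff_exists'.mp (fun h0 => hne (List.head?_eq_none_iff.mp h0))
  obtain ⟨b, hb⟩ := Option.ne_none_iff_exists'.mp (fun h0 => hne (List.getLast?_eq_none_iff.mp h0))
  have := headLast_mono (fun e : V × V × ℕ => e.2.2) p hch' a b ha hb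
  simp [firstTime, lastTime, ha, hb]
  exact this

lemma last_le_T {T : ℕ} {E : Set (V × V × ℕ)} (hT : ∀ e ∈ E, e.2.2 ≤ T)
    {u v : V} {p : List (V × V × ℕ)} (h : IsTempPath E u v p) : lastTime p ≤ T := by
  obtain ⟨hne, hE, -, -, -⟩ := h
  obtain ⟨b, hb⟩ := Option.ne_none_iff_exists'.mp (fun h0 => hne (List.getLast?_eq_none_iff.mp h0))
  have hbmem : b ∈ p := by
    obtain ⟨h', hb'⟩ := List.mem_getLast?_eq_getLast (x := b) (by rw [Option.mem_def, hb])
    exact hb' ▸ List.getLast_mem h'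
  have := hT b (hE b hbmem)
  simp [lastTime, hb]
  exact this

/-- on a finite temporal graph, if a temporal path from `u` to `v` exists,
then for all `α ∈ (1-ε,1)` with `ε` small enough, a temporal path minimizes `L_α` iff it
has the minimum number of edges, and minimum duration among the minimum-edge paths. -/
theorem stmt6 [Finite V] (T : ℕ) (E : Set (V × V × ℕ))
    (hsym : ∀ u v t, (u, v, t) ∈ E ↔ (v, u, t) ∈ E)
    (hT : ∀ e ∈ E, e.2.2 ≤ T) (u v : V)
    (hex : ∃ p, IsTempPath E u v p) :
    ∃ ε > (0 : ℝ), ∀ α : ℝ, 1 - ε < α → α < 1 →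
      ∀ p, IsTempPath E u v p →
        ((∀ q, IsTempPath E u v q → costL α p ≤ costL α q) ↔
          ((∀ q, IsTempPath E u v q → p.length ≤ q.length) ∧
           (∀ q, IsTempPath E u v q → q.length = p.length →
              lastTime p - firstTime p ≤ lastTime q - firstTime q))) := by
  refine ⟨1 / (T + 2), by positivity, fun α hα1 hα2 p hp => ?_⟩
  have hTpos : (0 : ℝ) < T + 2 := by positivity
  have hεT : (1 / (T + 2) : ℝ) * (T + 1) < 1 := by
    rw [div_mul_eq_mul_div, div_lt_one hTpos]; linarith
  have hαpos : (0 : ℝ) < α := by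
    have : (1 / (T + 2) : ℝ) ≤ 1 := by
      rw [div_le_one hTpos]; linarith [Nat.cast_nonneg (α := ℝ) T]
    nlinarith [Nat.cast_nonneg (α := ℝ) T, hα1, hεT]
  have h1α : (0 : ℝ) < 1 - α := by linarith
  have h1αε : (1 : ℝ) - α < 1 / (T + 2) := by linarith
  -- duration facts
  have dur_nonneg : ∀ q : List (V × V × ℕ), IsTempPath E u v q →
      (0 : ℝ) ≤ (lastTime q : ℝ) - firstTime q := by
    intro q hq
    have := first_le_last hq
    have : (firstTime q : ℝ) ≤ lastTime q := Nat.cast_le.mpr this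
    linarith
  have dur_le : ∀ q : List (V × V × ℕ), IsTempPath E u v q →
      (lastTime q : ℝ) - firstTime q ≤ T := by
    intro q hq
    have h1 : (lastTime q : ℝ) ≤ T := Nat.cast_le.mpr (last_le_T hT hq)
    have h2 : (0 : ℝ) ≤ firstTime q := Nat.cast_nonneg _
    linarith
  -- key: strictly shorter implies strictly cheaper
  have key : ∀ q r : List (V × V × ℕ), IsTempPath E u v q → IsTempPath E u v r →
      q.length < r.length → costL α q < costL α r := by
    intro q r hq hr hlt
    have hl : (q.length : ℝ) + 1 ≤ r.length := by exact_mod_cast hlt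
    have d1 := dur_nonneg r hr
    have d2 := dur_le q hq
    have hTnn : (0 : ℝ) ≤ T := Nat.cast_nonneg _
    unfold costL
    have h3 : (1 - α) * ((lastTime q : ℝ) - firstTime q) ≤ (1 - α) * T :=
      mul_le_mul_of_nonneg_left d2 h1α.le
    have h4 : (0 : ℝ) ≤ (1 - α) * ((lastTime r : ℝ) - firstTime r) :=
      mul_nonneg h1α.le d1
    have h5 : α * q.length + α ≤ α * r.length := by nlinarith
    have h6 : (1 - α) * T < α := by nlinarith
    nlinarith
  constructor
  · intro hmin
    constructor
    · intro q hq
      by_contra hlt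
      push_neg at hlt
      exact absurd (hmin q hq) (not_le.mpr (key q p hq hp hlt))
    · intro q hq hlen
      have hc := hmin q hq
      unfold costL at hc
      rw [hlen] at hc
      have hd : (lastTime p : ℝ) - firstTime p ≤ (lastTime q : ℝ) - firstTime q :=
        le_of_mul_le_mul_left (by linarith) h1α
      have hfp := first_le_last hp
      have hfq := first_le_last hq
      have : ((lastTime p - firstTime p : ℕ) : ℝ) ≤ ((lastTime q - firstTime q : ℕ) : ℝ) := by
        rw [Nat.cast_sub hfp, Nat.cast_sub hfq]; exact hd
      exact_mod_cast this
  · rintro ⟨hlen, hdur⟩ q hq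
    rcases lt_or_eq_of_le (hlen q hq) with hlt | heq
    · exact (key p q hp hq hlt).le
    · have hd : lastTime p - firstTime p ≤ lastTime q - firstTime q := hdur q hq heq.symm
      have hfp := first_le_last hp
      have hfq := first_le_last hq
      have hdR : (lastTime p : ℝ) - firstTime p ≤ (lastTime q : ℝ) - firstTime q := by
        rw [← Nat.cast_sub hfp, ← Nat.cast_sub hfq]
        exact_mod_cast hd
      unfold costL
      rw [heq]
      have := mul_le_mul_of_nonneg_left hdR h1α.le
      linarith
end
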